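/- Let G be a finite simple graph admitting an acyclic orientation in which every vertex has out-degree at most σ. Then the edge set of G can be partitioned into at most σ sets F_0, …, F_{σ−1}, each of which is a forest and each of which contains at most one outgoing edge of every vertex. In particular, the arboricity of G is at most σ. -/

import Mathlib

private lemma getVert_support_get {V : Type} {G : SimpleGraph V} {u v : V} (p : G.Walk u v) :
    ∀ n, n ≤ p.length → p.support[n]? = some (p.getVert n) := by
  induction p with
  | nil =>
    intro n hn
    rw [Nat.le_zero.mp hn]
    simp [SimpleGraph.Walk.getVert]
  | cons h q ih =>
    intro n hn
    cases n with
    | zero => simp [SimpleGraph.Walk.getVert]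
    | succ m =>
      rw [SimpleGraph.Walk.support_cons, SimpleGraph.Walk.getVert_cons_succ]
      simpa using ih m (by simpa using hn)

/-- If a finite simple graph `G` admits an acyclic orientation `o` in which
every vertex has out-degree at most `σ`, then the edge set of `G` can be partitioned into `σ`
pairwise disjoint sets `F_0, …, F_{σ-1}`, each a forest and each containing at most one
outgoing edge of every vertex.  In particular, the arboricity of `G` is at most `σ`. -/
theorem acyclic_orientation_arboricity
    {V : Type} [Fintype V] (G : SimpleGraph V) (σ : ℕ)
    (o : V → V → Prop) [DecidableRel o]
    (horient : ∀ u v, G.Adj u v → (o u v ↔ ¬ o v u))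
    (hsub : ∀ u v, o u v → G.Adj u v)
    (hacyc : ∀ v, ¬ Relation.TransGen o v v)
    (houtdeg : ∀ v : V, (Finset.univ.filter (o v)).card ≤ σ) :
    ∃ F : Fin σ → Set (Sym2 V),
      (∀ i, F i ⊆ G.edgeSet) ∧
      (⋃ i, F i) = G.edgeSet ∧
      (∀ i j, i ≠ j → Disjoint (F i) (F j)) ∧
      (∀ i, (SimpleGraph.fromEdgeSet (F i)).IsAcyclic) ∧
      (∀ i, ∀ v w₁ w₂ : V,
        s(v, w₁) ∈ F i → s(v, w₂) ∈ F i → o v w₁ → o v w₂ → w₁ = w₂) := by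
  classical
  -- basic orientation facts
  have hone : ∀ u v, o u v → ¬ o v u := fun u v h hv =>
    ((horient u v (hsub u v h)).1 h) hv
  -- the rank function: number of strict descendants; decreases along `o`
  set rank : V → ℕ := fun v => (Finset.univ.filter fun u => Relation.TransGen o v u).card
    with hrank_def
  have hrank : ∀ u v, o u v → rank v < rank u := by
    intro u v h
    apply Finset.card_lt_card
    constructor
    · intro x hx
      simp only [Finset.mem_filter, Finset.mem_univ, true_and] at hx ⊢
      exact Relation.TransGen.head h hx
    · intro hss
      have hv : v ∈ Finset.univ.filter fun x => Relation.TransGen o u x := by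
        simp [Relation.TransGen.single h]
      have := hss hv
      simp only [Finset.mem_filter, Finset.mem_univ, true_and] at this
      exact hacyc v this
  -- the index function
  set idx : V → V → ℕ := fun v w => (Finset.univ.filter (o v)).toList.idxOf w with hidx_def
  have hmemlist : ∀ v w, o v w → w ∈ (Finset.univ.filter (o v)).toList := by
    intro v w h
    rw [Finset.mem_toList]
    simp [h]
  have hidx_lt : ∀ v w, o v w → idx v w < σ := by
    intro v w h
    have h1 : idx v w < (Finset.univ.filter (o v)).toList.length :=
      List.idxOf_lt_length_iff.2 (hmemlist v w h)
    have h2 : (Finset.univ.filter (o v)).toList.length = (Finset.univ.filter (o v)).card :=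
      Finset.length_toList _
    rw [h2] at h1
    exact lt_of_lt_of_le h1 (houtdeg v)
  have hidx_inj : ∀ v w₁ w₂, o v w₁ → o v w₂ → idx v w₁ = idx v w₂ → w₁ = w₂ := by
    intro v w₁ w₂ h1 h2 heq
    have l1 : idx v w₁ < (Finset.univ.filter (o v)).toList.length :=
      List.idxOf_lt_length_iff.2 (hmemlist v w₁ h1)
    have l2 : idx v w₂ < (Finset.univ.filter (o v)).toList.length :=
      List.idxOf_lt_length_iff.2 (hmemlist v w₂ h2)
    have e1 : (Finset.univ.filter (o v)).toList[idx v w₁]'l1 = w₁ := List.getElem_idxOf l1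
    have e2 : (Finset.univ.filter (o v)).toList[idx v w₂]'l2 = w₂ := List.getElem_idxOf l2
    rw [← e1, ← e2]
    congr 1
  -- the partition
  set F : Fin σ → Set (Sym2 V) :=
    fun i => {e | ∃ v w, o v w ∧ idx v w = i.val ∧ e = s(v, w)} with hF_def
  have hmemF : ∀ (i : Fin σ) (v w : V), s(v, w) ∈ F i →
      (o v w ∧ idx v w = i.val) ∨ (o w v ∧ idx w v = i.val) := by
    rintro i v w ⟨a, b, h1, h2, h3⟩
    rw [Sym2.eq_iff] at h3
    rcases h3 with ⟨rfl, rfl⟩ | ⟨rfl, rfl⟩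
    · exact Or.inl ⟨h1, h2⟩
    · exact Or.inr ⟨h1, h2⟩
  have hFsub : ∀ i, F i ⊆ G.edgeSet := by
    rintro i e ⟨v, w, h1, h2, rfl⟩
    exact (hsub v w h1)
  refine ⟨F, hFsub, ?_, ?_, ?_, ?_⟩
  · -- union
    apply Set.eq_of_subset_of_subset
    · exact Set.iUnion_subset hFsub
    · intro e he
      induction e using Sym2.ind with
      | _ v w =>
        rw [SimpleGraph.mem_edgeSet] at he
        by_cases h : o v w
        · exact Set.mem_iUnion.2 ⟨⟨idx v w, hidx_lt v w h⟩, ⟨v, w, h, rfl, rfl⟩⟩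
        · have h' : o w v := by
            by_contra hc
            exact h ((horient v w he).2 hc)
          exact Set.mem_iUnion.2 ⟨⟨idx w v, hidx_lt w v h'⟩, ⟨w, v, h', rfl, Sym2.eq_swap⟩⟩
  · -- pairwise disjoint
    intro i j hij
    rw [Set.disjoint_left]
    rintro e ⟨v, w, h1, h2, rfl⟩ hj
    rcases hmemF j v w hj with ⟨h3, h4⟩ | ⟨h3, h4⟩
    · exact hij (Fin.ext (h2 ▸ h4 ▸ rfl))
    · exact hone v w h1 h3
  · -- acyclicity
    intro i v c hc
    have hn3 : 3 ≤ c.length := hc.three_le_length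
    have hvn : c.getVert c.length = v := c.getVert_length
    have hv0 : c.getVert 0 = v := c.getVert_zero
    -- choose a vertex of maximal rank along the cycle
    obtain ⟨k, hk, hkmax⟩ := Finset.exists_max_image (Finset.range c.length)
      (fun j => rank (c.getVert j)) ⟨0, by simp; omega⟩
    rw [Finset.mem_range] at hk
    set m := c.getVert k with hm
    have hmax : ∀ j, j ≤ c.length → rank (c.getVert j) ≤ rank m := by
      intro j hj
      rcases lt_or_eq_of_le hj with hj' | rfl
      · exact hkmax j (Finset.mem_range.2 hj')
      · rw [hvn, ← hv0]
        exact hkmax 0 (Finset.mem_range.2 (by omega))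
    -- the two neighbours of m along the cycle
    set prev : ℕ := if k = 0 then c.length - 1 else k - 1 with hprev_def
    have hprev_lt : prev < c.length := by
      rw [hprev_def]; split <;> omega
    have hprev_succ : c.getVert (prev + 1) = m := by
      rw [hprev_def]
      split
      · rename_i h0
        have h1 : c.length - 1 + 1 = c.length := by omega
        rw [h1, hvn, hm, h0, hv0]
      · rename_i h0
        have h1 : k - 1 + 1 = k := by omega
        rw [h1]
    have hadj1 : (SimpleGraph.fromEdgeSet (F i)).Adj m (c.getVert (k + 1)) :=
      c.adj_getVert_succ hk
    have hadj2 : (SimpleGraph.fromEdgeSet (F i)).Adj (c.getVert prev) m := by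
      have := c.adj_getVert_succ hprev_lt
      rwa [hprev_succ] at this
    set x := c.getVert (k + 1) with hx
    set y := c.getVert prev with hy
    -- both edges are oriented away from m
    have horient_m : ∀ z : V, (SimpleGraph.fromEdgeSet (F i)).Adj m z →
        rank z ≤ rank m → o m z ∧ idx m z = i.val := by
      intro z hz hrz
      rw [SimpleGraph.fromEdgeSet_adj] at hz
      rcases hmemF i m z hz.1 with h | ⟨h1, h2⟩
      · exact h
      · exact absurd (lt_of_le_of_lt hrz (hrank z m h1)) (lt_irrefl _)
    have hx_le : rank x ≤ rank m := hmax (k + 1) (by omega)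
    have hy_le : rank y ≤ rank m := hmax prev (by omega)
    obtain ⟨hox, hix⟩ := horient_m x hadj1 hx_le
    obtain ⟨hoy, hiy⟩ := horient_m y hadj2.symm hy_le
    have hxy : x = y := hidx_inj m x y hox hoy (hix.trans hiy.symm)
    -- but x and y are distinct vertices of the cycle: contradiction
    have hlen : c.support.tail.length = c.length := by
      have h1 := c.length_support
      simp only [List.length_tail, h1]
      omega
    have hinj : ∀ a b, 1 ≤ a → a ≤ c.length → 1 ≤ b → b ≤ c.length →
        c.getVert a = c.getVert b → a = b := by
      intro a b ha1 ha2 hb1 hb2 hab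
      obtain ⟨a', rfl⟩ : ∃ a', a = a' + 1 := ⟨a - 1, by omega⟩
      obtain ⟨b', rfl⟩ : ∃ b', b = b' + 1 := ⟨b - 1, by omega⟩
      have hta : c.support.tail[a']? = some (c.getVert (a' + 1)) := by
        have h1 := getVert_support_get c (a' + 1) ha2
        rw [c.support_eq_cons, List.getElem?_cons_succ] at h1
        exact h1
      have htb : c.support.tail[b']? = some (c.getVert (b' + 1)) := by
        have h1 := getVert_support_get c (b' + 1) hb2
        rw [c.support_eq_cons, List.getElem?_cons_succ] at h1
        exact h1
      have : a' = b' := by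
        apply (List.getElem?_inj (by omega : a' < c.support.tail.length) hc.support_nodup).1
        rw [hta, htb, hab]
      omega
    by_cases hk0 : k = 0
    · have hprev_eq : prev = c.length - 1 := by rw [hprev_def, if_pos hk0]
      have : k + 1 = prev := by
        apply hinj (k + 1) prev (by omega) (by omega) (by omega) (by omega)
        exact hxy
      omega
    · have hprev_eq : prev = k - 1 := by rw [hprev_def, if_neg hk0]
      by_cases hp0 : prev = 0
      · have hyn : y = c.getVert c.length := by
          rw [hy, hp0, hv0, hvn]
        have : k + 1 = c.length := by
          apply hinj (k + 1) c.length (by omega) (by omega) (by omega) (by omega)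
          exact hxy.trans hyn
        omega
      · have : k + 1 = prev := by
          apply hinj (k + 1) prev (by omega) (by omega) (by omega) (by omega)
          exact hxy
        omega
  · -- at most one outgoing edge per vertex per class
    intro i v w₁ w₂ h1 h2 ho1 ho2
    rcases hmemF i v w₁ h1 with ⟨h3, h4⟩ | ⟨h3, h4⟩
    · rcases hmemF i v w₂ h2 with ⟨h5, h6⟩ | ⟨h5, h6⟩
      · exact hidx_inj v w₁ w₂ h3 h5 (h4.trans h6.symm)
      · exact absurd h5 (hone v w₂ ho2)
    · exact absurd h3 (hone v w₁ ho1)
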